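/- Let (A, ◁, ▷, ⋄) be a pre-Gel'fand-Dorfman algebra. Define a∘b := a◁b + a▷b and [a,b] := a⋄b − b⋄a. Then (A, ∘, [·,·]) is a Gel'fand-Dorfman algebra: (A,∘) is a Novikov algebra, (A,[·,·]) is a Lie algebra, and the compatibility condition [a∘b,c] − [a∘c,b] + [a,b]∘c − [a,c]∘b − a∘[b,c] = 0 holds for all a,b,c. -/

import Mathlib

def IsNovikov {A : Type*} [AddCommGroup A] (circ : A → A → A) : Prop :=
  (∀ a b c : A, circ (circ a b) c - circ a (circ b c) = circ (circ b a) c - circ b (circ a c)) ∧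
  (∀ a b c : A, circ (circ a b) c = circ (circ a c) b)

def IsLieBr {A : Type*} [AddCommGroup A] (br : A → A → A) : Prop :=
  (∀ a b : A, br a b = - br b a) ∧
  (∀ a b c : A, br (br a b) c + br (br b c) a + br (br c a) b = 0)

def IsGD {A : Type*} [AddCommGroup A] (circ br : A → A → A) : Prop :=
  IsNovikov circ ∧ IsLieBr br ∧
  (∀ a b c : A, br (circ a b) c - br (circ a c) b + circ (br a b) c
      - circ (br a c) b - circ a (br b c) = 0)
def IsPreNovikov {A : Type*} [AddCommGroup A] (lhd rhd : A → A → A) : Prop :=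
  (∀ a b c : A, rhd a (rhd b c)
      = rhd (rhd a b + lhd a b) c + rhd b (rhd a c) - rhd (rhd b a + lhd b a) c) ∧
  (∀ a b c : A, rhd a (lhd b c)
      = lhd (rhd a b) c + lhd b (lhd a c + rhd a c) - lhd (lhd b a) c) ∧
  (∀ a b c : A, rhd (lhd a b + rhd a b) c = lhd (rhd a c) b) ∧
  (∀ a b c : A, lhd (lhd a b) c = lhd (lhd a c) b)

def IsPreLie {A : Type*} [AddCommGroup A] (dia : A → A → A) : Prop :=
  ∀ a b c : A, dia (dia a b) c - dia a (dia b c) = dia (dia b a) c - dia b (dia a c)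

def IsPreGD {A : Type*} [AddCommGroup A] (lhd rhd dia : A → A → A) : Prop :=
  IsPreNovikov lhd rhd ∧ IsPreLie dia ∧
  (∀ a b c : A, lhd c (dia a b - dia b a) - dia a (lhd c b) - lhd (dia b c) a
      = - dia b (lhd c a) - lhd (dia a c) b) ∧
  (∀ a b c : A, rhd (dia a b - dia b a) c + dia (lhd a b + rhd a b) c
      = rhd a (dia b c) - dia b (rhd a c) + lhd (dia a c) b)
theorem stmt1 {k A : Type*} [Field k] [AddCommGroup A] [Module k A]
    (lhd rhd dia : A →ₗ[k] A →ₗ[k] A)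
    (hpre : IsPreGD (fun a b => lhd a b) (fun a b => rhd a b) (fun a b => dia a b)) :
    IsGD (fun a b : A => lhd a b + rhd a b) (fun a b : A => dia a b - dia b a) := by
  obtain ⟨⟨N1, N2, N3, N4⟩, P, C1, C2⟩ := hpre
  simp only [map_add, map_sub, LinearMap.add_apply, LinearMap.sub_apply] at N1 N2 N3 N4 P C1 C2 ⊢
  refine ⟨⟨fun a b c => ?_, fun a b c => ?_⟩, ⟨fun a b => ?_, fun a b c => ?_⟩, fun a b c => ?_⟩
  · simp only [map_add, LinearMap.add_apply]
    linear_combination (norm := abel) -N1 a b c - N2 a b c + N2 b a c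
  · simp only [map_add, LinearMap.add_apply]
    linear_combination (norm := abel) N3 a b c - N3 a c b + N4 a b c
  · rw [neg_sub]
  · simp only [map_sub, LinearMap.sub_apply]
    linear_combination (norm := abel) P a b c + P b c a + P c a b
  · simp only [map_add, map_sub, LinearMap.add_apply, LinearMap.sub_apply]
    linear_combination (norm := abel) C2 a b c - C2 a c b - C1 b c a
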